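/- Let r be a positive integer and H a complex Hilbert space. Suppose e ∈ L(ℂ^r, H) is the weak-operator-topology limit of a sequence (e_k) of minimal tripotents in L(ℂ^r, H) (i.e., e_k = a_k⊗b_k with unit vectors a_k ∈ ℂ^r, b_k ∈ H). Then {e, L(ℂ^r, H), e} ⊆ ℂ e; that is, for every z ∈ L(ℂ^r, H) there exists λ ∈ ℂ with e z* e = λ e. -/

import Mathlib

open ContinuousLinearMap Filter

/-- The rank-one operator `a ⊗ b : ℂ^r → H`, `μ ↦ ⟨μ, a⟩ b` (inner product linear in the
first variable, i.e. `⟪a, μ⟫` in Mathlib's convention). -/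
noncomputable def rankOne {r : ℕ} {H : Type*} [NormedAddCommGroup H] [InnerProductSpace ℂ H]
    (a : EuclideanSpace ℂ (Fin r)) (b : H) : EuclideanSpace ℂ (Fin r) →L[ℂ] H :=
  (innerSL ℂ a).smulRight b

/-- If `e ∈ L(ℂ^r, H)` is the weak-operator-topology limit of a sequence of minimal
tripotents, then `{e, L(ℂ^r,H), e} ⊆ ℂ e`: for each `z` there is `λ ∈ ℂ` with `e z* e = λ e`. -/
theorem stmt3 {r : ℕ} (hr : 0 < r) {H : Type*} [NormedAddCommGroup H] [InnerProductSpace ℂ H]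
    [CompleteSpace H]
    (e : ℕ → EuclideanSpace ℂ (Fin r) →L[ℂ] H) (e' : EuclideanSpace ℂ (Fin r) →L[ℂ] H)
    (hmin : ∀ k, ∃ (a : EuclideanSpace ℂ (Fin r)) (b : H),
      ‖a‖ = 1 ∧ ‖b‖ = 1 ∧ e k = rankOne a b)
    (he : ∀ (μ : EuclideanSpace ℂ (Fin r)) (h : H),
      Tendsto (fun k => (inner ℂ (e k μ) h : ℂ)) atTop (nhds (inner ℂ (e' μ) h))) :
    ∀ z : EuclideanSpace ℂ (Fin r) →L[ℂ] H, ∃ lam : ℂ,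
      e' ∘L adjoint z ∘L e' = lam • e' := by
  -- rank-one determinant identity for each `e k`
  have hk : ∀ k (μ ν : EuclideanSpace ℂ (Fin r)) (h h' : H),
      (inner ℂ (e k μ) h : ℂ) * inner ℂ (e k ν) h'
        = (inner ℂ (e k μ) h' : ℂ) * inner ℂ (e k ν) h := by
    intro k μ ν h h'
    obtain ⟨a, b, -, -, hab⟩ := hmin k
    simp only [hab, rankOne, ContinuousLinearMap.smulRight_apply, innerSL_apply_apply,
      inner_smul_left]
    ring
  -- pass to the limit
  have key : ∀ (μ ν : EuclideanSpace ℂ (Fin r)) (h h' : H),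
      (inner ℂ (e' μ) h : ℂ) * inner ℂ (e' ν) h'
        = (inner ℂ (e' μ) h' : ℂ) * inner ℂ (e' ν) h := by
    intro μ ν h h'
    have h1 : Tendsto (fun k => (inner ℂ (e k μ) h : ℂ) * inner ℂ (e k ν) h') atTop
        (nhds ((inner ℂ (e' μ) h : ℂ) * inner ℂ (e' ν) h')) := (he μ h).mul (he ν h')
    have h2 : Tendsto (fun k => (inner ℂ (e k μ) h : ℂ) * inner ℂ (e k ν) h') atTop
        (nhds ((inner ℂ (e' μ) h' : ℂ) * inner ℂ (e' ν) h)) := by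
      have := (he μ h').mul (he ν h)
      refine this.congr fun k => ?_
      exact (hk k μ ν h h').symm
    exact tendsto_nhds_unique h1 h2
  intro z
  by_cases h0 : e' = 0
  · exact ⟨0, by simp [h0]⟩
  · have : ∃ μ₀, e' μ₀ ≠ 0 := by
      by_contra hc
      push_neg at hc
      exact h0 (ContinuousLinearMap.ext fun μ => by simp [hc μ])
    obtain ⟨μ₀, hμ₀⟩ := this
    set b : H := e' μ₀ with hb
    have hB : (inner ℂ b b : ℂ) ≠ 0 := by
      simpa [inner_self_eq_zero] using hμ₀
    -- every value of e' is a multiple of b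
    have helper : ∀ μ, e' μ = ((inner ℂ b (e' μ) : ℂ) / inner ℂ b b) • b := by
      intro μ
      apply ext_inner_right ℂ
      intro h'
      rw [inner_smul_left]
      have hkey := key μ μ₀ b h'
      rw [← hb] at hkey
      rw [map_div₀, inner_conj_symm, inner_conj_symm]
      field_simp
      linear_combination -hkey
    refine ⟨(inner ℂ b (e' (adjoint z b)) : ℂ) / inner ℂ b b, ?_⟩
    ext μ
    simp only [ContinuousLinearMap.comp_apply, ContinuousLinearMap.smul_apply]
    rw [helper μ, map_smul, map_smul, helper (adjoint z b)]
    simp only [inner_smul_right, smul_smul]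
    congr 1
    field_simp
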